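/- Let π be an irreducible generalized permutation of type (l,m) satisfying the convention, let ε ∈ {0,1}, and suppose R_ε(π) is defined. Then R_ε(π) is irreducible. -/

import Mathlib

open Finset

/-- A generalized permutation of type `(l, m)`: a map from positions `1, …, l + m`
(the top line being positions `1, …, l` and the bottom line positions `l+1, …, l+m`)
to an alphabet `A`, such that every letter has exactly two preimages. -/
structure GenPerm (A : Type*) [DecidableEq A] where
  l : ℕ
  m : ℕ
  p : ℕ → A
  double : ∀ a : A, ((Finset.Icc 1 (l + m)).filter (fun i => p i = a)).card = 2

namespace GenPerm

variable {A : Type*} [DecidableEq A]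

/-- Total number of positions, `l + m = 2d`. -/
def size (π : GenPerm A) : ℕ := π.l + π.m

/-- The multiset of letters occupying positions `a, a+1, …, b`. -/
def seg (π : GenPerm A) (a b : ℕ) : Multiset A :=
  (Finset.Icc a b).val.map π.p

/-- `i` and `j` are the two positions of a common letter (i.e. `j = σ(i)` where `σ` is the
fixed-point-free involution associated to `π`). -/
def IsTwin (π : GenPerm A) (i j : ℕ) : Prop :=
  1 ≤ i ∧ i ≤ π.size ∧ 1 ≤ j ∧ j ≤ π.size ∧ i ≠ j ∧ π.p i = π.p j

/-- The convention: some letter has both occurrences on the top line, and some letter has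
both occurrences on the bottom line. -/
def Convention (π : GenPerm A) : Prop :=
  (∃ i j, π.IsTwin i j ∧ i ≤ π.l ∧ j ≤ π.l) ∧
  (∃ i j, π.IsTwin i j ∧ π.l < i ∧ π.l < j)

/-- `π` is reducible: it admits a decomposition with corners `A∪B`, `D∪B`, `A∪C`, `D∪C`
(for disjoint, not all empty, subsets `A,B,C,D` of the alphabet) such that (i) no corner is
empty, or (ii) exactly one corner is empty and it is a left one, or (iii) exactly two corners
are empty and they are both left or both right. -/
def Reducible (π : GenPerm A) : Prop :=
  ∃ (As Bs Cs Ds : Finset A) (i1 i2 i3 i4 : ℕ),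
    Disjoint As Bs ∧ Disjoint As Cs ∧ Disjoint As Ds ∧
    Disjoint Bs Cs ∧ Disjoint Bs Ds ∧ Disjoint Cs Ds ∧
    ¬(As = ∅ ∧ Bs = ∅ ∧ Cs = ∅ ∧ Ds = ∅) ∧
    i1 ≤ i2 ∧ i2 ≤ π.l ∧ π.l ≤ i3 ∧ i3 ≤ i4 ∧ i4 ≤ π.size ∧
    π.seg 1 i1 = As.val + Bs.val ∧
    π.seg (i2 + 1) π.l = Ds.val + Bs.val ∧
    π.seg (π.l + 1) i3 = As.val + Cs.val ∧
    π.seg (i4 + 1) π.size = Ds.val + Cs.val ∧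
    ((π.seg 1 i1 ≠ 0 ∧ π.seg (i2 + 1) π.l ≠ 0 ∧ π.seg (π.l + 1) i3 ≠ 0 ∧
        π.seg (i4 + 1) π.size ≠ 0) ∨
     (π.seg 1 i1 = 0 ∧ π.seg (i2 + 1) π.l ≠ 0 ∧ π.seg (π.l + 1) i3 ≠ 0 ∧
        π.seg (i4 + 1) π.size ≠ 0) ∨
     (π.seg 1 i1 ≠ 0 ∧ π.seg (i2 + 1) π.l ≠ 0 ∧ π.seg (π.l + 1) i3 = 0 ∧
        π.seg (i4 + 1) π.size ≠ 0) ∨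
     (π.seg 1 i1 = 0 ∧ π.seg (i2 + 1) π.l ≠ 0 ∧ π.seg (π.l + 1) i3 = 0 ∧
        π.seg (i4 + 1) π.size ≠ 0) ∨
     (π.seg 1 i1 ≠ 0 ∧ π.seg (i2 + 1) π.l = 0 ∧ π.seg (π.l + 1) i3 ≠ 0 ∧
        π.seg (i4 + 1) π.size = 0))

/-- `π` is irreducible if it is not reducible. -/
def Irreducible (π : GenPerm A) : Prop := ¬ π.Reducible

/-- `π` is strongly irreducible if every decomposition with corners `A∪B`, `D∪B`, `A∪C`,
`D∪C` (for disjoint subsets) has all four corners empty. -/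
def StronglyIrreducible (π : GenPerm A) : Prop :=
  ∀ (As Bs Cs Ds : Finset A) (i1 i2 i3 i4 : ℕ),
    Disjoint As Bs → Disjoint As Cs → Disjoint As Ds →
    Disjoint Bs Cs → Disjoint Bs Ds → Disjoint Cs Ds →
    i1 ≤ i2 → i2 ≤ π.l → π.l ≤ i3 → i3 ≤ i4 → i4 ≤ π.size →
    π.seg 1 i1 = As.val + Bs.val →
    π.seg (i2 + 1) π.l = Ds.val + Bs.val →
    π.seg (π.l + 1) i3 = As.val + Cs.val →
    π.seg (i4 + 1) π.size = Ds.val + Cs.val →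
    (π.seg 1 i1 = 0 ∧ π.seg (i2 + 1) π.l = 0 ∧ π.seg (π.l + 1) i3 = 0 ∧
      π.seg (i4 + 1) π.size = 0)

/-- `Σ_{j=1}^{k} ζ_{π(j)}` (partial sum along the top line). -/
noncomputable def topSum (π : GenPerm A) (ζ : A → ℂ) (k : ℕ) : ℂ := ∑ j ∈ Finset.Icc 1 k, ζ (π.p j)

/-- `Σ_{j=1}^{k} ζ_{π(l+j)}` (partial sum along the bottom line). -/
noncomputable def botSum (π : GenPerm A) (ζ : A → ℂ) (k : ℕ) : ℂ := ∑ j ∈ Finset.Icc 1 k, ζ (π.p (π.l + j))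

/-- Real version of `topSum`. -/
noncomputable def topSumR (π : GenPerm A) (τ : A → ℝ) (k : ℕ) : ℝ := ∑ j ∈ Finset.Icc 1 k, τ (π.p j)

/-- Real version of `botSum`. -/
noncomputable def botSumR (π : GenPerm A) (τ : A → ℝ) (k : ℕ) : ℝ := ∑ j ∈ Finset.Icc 1 k, τ (π.p (π.l + j))

/-- `ζ` is a suspension data for `π`. -/
def IsSuspension (π : GenPerm A) (ζ : A → ℂ) : Prop :=
  (∀ a, 0 < (ζ a).re) ∧
  (∀ i, 1 ≤ i → i ≤ π.l - 1 → 0 < (π.topSum ζ i).im) ∧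
  (∀ i, 1 ≤ i → i ≤ π.m - 1 → (π.botSum ζ i).im < 0) ∧
  π.topSum ζ π.l = π.botSum ζ π.m

/-- `τ` is a pseudo-suspension for `π`. -/
def IsPseudoSusp (π : GenPerm A) (τ : A → ℝ) : Prop :=
  (∀ k, 1 ≤ k → k ≤ π.l → 0 ≤ π.topSumR τ k) ∧
  (∀ k, 1 ≤ k → k ≤ π.m → π.botSumR τ k ≤ 0) ∧
  π.topSumR τ π.l = 0 ∧ π.botSumR τ π.m = 0

/-- `τ` is a strict pseudo-suspension for `π`: all the inequalities are strict except the
extremal ones. -/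
def IsStrictPseudoSusp (π : GenPerm A) (τ : A → ℝ) : Prop :=
  π.IsPseudoSusp τ ∧
  (∀ k, 1 ≤ k → k ≤ π.l - 1 → 0 < π.topSumR τ k) ∧
  (∀ k, 1 ≤ k → k ≤ π.m - 1 → π.botSumR τ k < 0)

/-- Number of occurrences of the letter `a` on the top line; so `a ∈ 𝒜₀ ↔ topCount = 2`,
`a ∈ 𝒜₁ ↔ topCount = 0`, and `a ∈ 𝒜₀₁ ↔ topCount = 1`. -/
def topCount (π : GenPerm A) (a : A) : ℕ :=
  ((Finset.Icc 1 π.l).filter (fun i => π.p i = a)).card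

end GenPerm

/-- `π'` is the result of applying the Rauzy operation `R₀` to `π` (this encodes, in
particular, that `R₀ π` is defined). -/
def IsR0 {A : Type*} [DecidableEq A] (π π' : GenPerm A) : Prop :=
  (∃ t, π.IsTwin π.l t ∧ π.l < t ∧ π.p π.l ≠ π.p π.size ∧
    π'.l = π.l ∧ π'.m = π.m ∧
    (∀ i, 1 ≤ i → i ≤ t → π'.p i = π.p i) ∧
    π'.p (t + 1) = π.p π.size ∧
    (∀ i, t + 1 < i → i ≤ π.size → π'.p i = π.p (i - 1)))
  ∨
  (∃ t, π.IsTwin π.l t ∧ t ≤ π.l ∧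
    (∃ x y, π.IsTwin x y ∧ π.l + 1 ≤ x ∧ x ≤ π.size - 1 ∧ π.l + 1 ≤ y ∧ y ≤ π.size - 1) ∧
    π'.l = π.l + 1 ∧ π'.m = π.m - 1 ∧
    (∀ i, 1 ≤ i → i < t → π'.p i = π.p i) ∧
    π'.p t = π.p π.size ∧
    (∀ i, t < i → i ≤ π.size → π'.p i = π.p (i - 1)))

/-- `π'` is the result of applying the Rauzy operation `R₁` to `π` (this encodes, in
particular, that `R₁ π` is defined). -/
def IsR1 {A : Type*} [DecidableEq A] (π π' : GenPerm A) : Prop :=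
  (∃ t, π.IsTwin π.size t ∧ t ≤ π.l ∧ π.p π.l ≠ π.p π.size ∧
    π'.l = π.l ∧ π'.m = π.m ∧
    π'.p (t + 1) = π.p π.l ∧
    (∀ i, t + 1 < i → i ≤ π.l → π'.p i = π.p (i - 1)) ∧
    (∀ i, 1 ≤ i → i ≤ π.size → (i ≤ t ∨ π.l < i) → π'.p i = π.p i))
  ∨
  (∃ t, π.IsTwin π.size t ∧ π.l < t ∧
    (∃ x y, π.IsTwin x y ∧ 1 ≤ x ∧ x ≤ π.l - 1 ∧ 1 ≤ y ∧ y ≤ π.l - 1) ∧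
    π'.l = π.l - 1 ∧ π'.m = π.m + 1 ∧
    (∀ i, π.l ≤ i → i < t - 1 → π'.p i = π.p (i + 1)) ∧
    π'.p (t - 1) = π.p π.l ∧
    (∀ i, 1 ≤ i → i ≤ π.size → (i < π.l ∨ t - 1 < i) → π'.p i = π.p i))

namespace GenPerm

variable {A : Type*} [DecidableEq A]

lemma seg_eq_zero {π : GenPerm A} {a b : ℕ} (h : b < a) : π.seg a b = 0 := by
  unfold seg
  rw [Finset.Icc_eq_empty (by omega)]
  rfl

lemma seg_eq_zero_iff {π : GenPerm A} {a b : ℕ} : π.seg a b = 0 ↔ b < a := by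
  constructor
  · intro h
    by_contra hab
    have : a ∈ Finset.Icc a b := Finset.mem_Icc.2 ⟨le_refl _, by omega⟩
    have : π.p a ∈ π.seg a b := Multiset.mem_map_of_mem _ this
    rw [h] at this
    exact absurd this (Multiset.notMem_zero _)
  · exact seg_eq_zero

lemma seg_single (π : GenPerm A) (a : ℕ) : π.seg a a = {π.p a} := by
  unfold seg
  rw [Finset.Icc_self]
  rfl

lemma seg_split (π : GenPerm A) {a b : ℕ} (c : ℕ) (h1 : a ≤ c + 1) (h2 : c ≤ b) :
    π.seg a b = π.seg a c + π.seg (c + 1) b := by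
  have hdisj : Disjoint (Finset.Icc a c) (Finset.Icc (c + 1) b) := by
    rw [Finset.disjoint_left]
    intro i hi1 hi2
    rw [Finset.mem_Icc] at hi1 hi2
    omega
  have h : Finset.Icc a b = (Finset.Icc a c).disjUnion (Finset.Icc (c + 1) b) hdisj := by
    ext i
    simp only [Finset.mem_Icc, Finset.mem_disjUnion]
    omega
  unfold seg
  rw [h]
  rw [show ((Finset.Icc a c).disjUnion (Finset.Icc (c + 1) b) hdisj).val
      = (Finset.Icc a c).val + (Finset.Icc (c + 1) b).val from rfl, Multiset.map_add]

lemma seg_eqOn {π π' : GenPerm A} {a b : ℕ} (h : ∀ i, a ≤ i → i ≤ b → π'.p i = π.p i) :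
    π'.seg a b = π.seg a b := by
  unfold seg
  refine Multiset.map_congr rfl ?_
  intro i hi
  rw [Finset.mem_val, Finset.mem_Icc] at hi
  exact h i hi.1 hi.2

lemma seg_shift_pred {π π' : GenPerm A} {a b : ℕ} (ha : 1 ≤ a) (hb : 1 ≤ b)
    (h : ∀ i, a ≤ i → i ≤ b → π'.p i = π.p (i - 1)) :
    π'.seg a b = π.seg (a - 1) (b - 1) := by
  have key : Finset.Icc a b = (Finset.Icc (a - 1) (b - 1)).map
      ⟨fun x => x + 1, fun x y hxy => by simpa using hxy⟩ := by
    ext i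
    simp only [Finset.mem_Icc, Finset.mem_map, Function.Embedding.coeFn_mk]
    constructor
    · intro hi
      exact ⟨i - 1, by omega, by show i - 1 + 1 = i; omega⟩
    · rintro ⟨j, hj, rfl⟩
      show a ≤ j + 1 ∧ j + 1 ≤ b; omega
  unfold seg
  rw [key, Finset.map_val, Multiset.map_map]
  refine Multiset.map_congr rfl ?_
  intro j hj
  rw [Finset.mem_val, Finset.mem_Icc] at hj
  simp only [Function.comp_apply, Function.Embedding.coeFn_mk]
  exact h (j + 1) (by omega) (by omega)

lemma seg_shift_succ {π π' : GenPerm A} {a b : ℕ}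
    (h : ∀ i, a ≤ i → i ≤ b → π'.p i = π.p (i + 1)) :
    π'.seg a b = π.seg (a + 1) (b + 1) := by
  have key : Finset.Icc (a + 1) (b + 1) = (Finset.Icc a b).map
      ⟨fun x => x + 1, fun x y hxy => by simpa using hxy⟩ := by
    ext i
    simp only [Finset.mem_Icc, Finset.mem_map, Function.Embedding.coeFn_mk]
    constructor
    · intro hi
      exact ⟨i - 1, by omega, by show i - 1 + 1 = i; omega⟩
    · rintro ⟨j, hj, rfl⟩
      show a + 1 ≤ j + 1 ∧ j + 1 ≤ b + 1; omega
  unfold seg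
  rw [key, Finset.map_val, Multiset.map_map]
  refine Multiset.map_congr rfl ?_
  intro j hj
  rw [Finset.mem_val, Finset.mem_Icc] at hj
  simp only [Function.comp_apply, Function.Embedding.coeFn_mk]
  exact h j hj.1 hj.2

/-- Insertion lemma, "pred" version: `π'` agrees with `π` below position `u`, has letter `z`
at position `u`, and is `π` shifted by one above `u`. -/
lemma seg_insert_pred {π π' : GenPerm A} {u a b : ℕ} {z : A} (hu : 1 ≤ u)
    (hau : a ≤ u) (hub : u ≤ b)
    (hlow : ∀ i, a ≤ i → i < u → π'.p i = π.p i)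
    (hmid : π'.p u = z)
    (hhigh : ∀ i, u < i → i ≤ b → π'.p i = π.p (i - 1)) :
    π'.seg a b = π.seg a (b - 1) + {z} := by
  have e1 : π'.seg a b = π'.seg a (u - 1) + π'.seg u b := by
    have := π'.seg_split (a := a) (b := b) (u - 1) (by omega) (by omega)
    rwa [show u - 1 + 1 = u by omega] at this
  have e2 : π'.seg u b = π'.seg u u + π'.seg (u + 1) b := π'.seg_split u (by omega) hub
  have e3 : π'.seg a (u - 1) = π.seg a (u - 1) := seg_eqOn (fun i hi1 hi2 => hlow i hi1 (by omega))
  have e4 : π'.seg u u = {z} := by rw [seg_single, hmid]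
  have e5 : π'.seg (u + 1) b = π.seg u (b - 1) := by
    have := seg_shift_pred (π := π) (π' := π') (a := u + 1) (b := b) (by omega) (by omega)
      (fun i hi1 hi2 => hhigh i (by omega) hi2)
    rwa [show u + 1 - 1 = u by omega] at this
  have e6 : π.seg a (b - 1) = π.seg a (u - 1) + π.seg u (b - 1) := by
    have := π.seg_split (c := u - 1) (a := a) (b := b - 1) (by omega) (by omega)
    rwa [show u - 1 + 1 = u by omega] at this
  rw [e1, e2, e3, e4, e5, e6]
  rw [add_comm ({z} : Multiset A) (π.seg u (b - 1)), ← add_assoc]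

/-- Insertion lemma, "succ" version: `π'` is `π` shifted up by one below position `u`, has
letter `z` at position `u`, and agrees with `π` above `u`. -/
lemma seg_insert_succ {π π' : GenPerm A} {u a b : ℕ} {z : A} (hu : 1 ≤ u)
    (hau : a ≤ u) (hub : u ≤ b)
    (hlow : ∀ i, a ≤ i → i < u → π'.p i = π.p (i + 1))
    (hmid : π'.p u = z)
    (hhigh : ∀ i, u < i → i ≤ b → π'.p i = π.p i) :
    π'.seg a b = π.seg (a + 1) b + {z} := by
  have e1 : π'.seg a b = π'.seg a (u - 1) + π'.seg u b := by
    have := π'.seg_split (a := a) (b := b) (u - 1) (by omega) (by omega)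
    rwa [show u - 1 + 1 = u by omega] at this
  have e2 : π'.seg u b = π'.seg u u + π'.seg (u + 1) b := π'.seg_split u (by omega) hub
  have e3 : π'.seg a (u - 1) = π.seg (a + 1) u := by
    have := seg_shift_succ (π := π) (π' := π') (a := a) (b := u - 1)
      (fun i hi1 hi2 => hlow i hi1 (by omega))
    rw [this, show u - 1 + 1 = u by omega]
  have e4 : π'.seg u u = {z} := by rw [seg_single, hmid]
  have e5 : π'.seg (u + 1) b = π.seg (u + 1) b := seg_eqOn (fun i hi1 hi2 => hhigh i (by omega) hi2)
  have e6 : π.seg (a + 1) b = π.seg (a + 1) u + π.seg (u + 1) b := by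
    exact π.seg_split (c := u) (by omega) hub
  rw [e1, e2, e3, e4, e5, e6]
  rw [add_comm ({z} : Multiset A) (π.seg (u + 1) b), ← add_assoc]

lemma count_seg (π : GenPerm A) (a b : ℕ) (x : A) :
    (π.seg a b).count x = ((Finset.Icc a b).filter (fun i => π.p i = x)).card := by
  unfold seg
  rw [Multiset.count_map]
  have : Multiset.filter (fun i => x = π.p i) (Finset.Icc a b).val
       = Multiset.filter (fun i => π.p i = x) (Finset.Icc a b).val :=
    Multiset.filter_congr (fun i _ => eq_comm)
  rw [this]
  rfl

lemma count_total (π : GenPerm A) (x : A) : (π.seg 1 π.size).count x = 2 := by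
  rw [count_seg]
  exact π.double x

lemma count_ge_two {π : GenPerm A} {a b q r : ℕ} {x : A} (hqr : q ≠ r)
    (haq : a ≤ q) (hqb : q ≤ b) (har : a ≤ r) (hrb : r ≤ b)
    (hq : π.p q = x) (hr : π.p r = x) : 2 ≤ (π.seg a b).count x := by
  rw [count_seg]
  have hsub : ({q, r} : Finset ℕ) ⊆ (Finset.Icc a b).filter (fun i => π.p i = x) := by
    intro i hi
    rw [Finset.mem_insert, Finset.mem_singleton] at hi
    rcases hi with rfl | rfl
    · exact Finset.mem_filter.2 ⟨Finset.mem_Icc.2 ⟨haq, hqb⟩, hq⟩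
    · exact Finset.mem_filter.2 ⟨Finset.mem_Icc.2 ⟨har, hrb⟩, hr⟩
  calc 2 = ({q, r} : Finset ℕ).card := (Finset.card_pair hqr).symm
  _ ≤ _ := Finset.card_le_card hsub

lemma three_pos_contra {π : GenPerm A} {q r s : ℕ} {x : A}
    (hq1 : 1 ≤ q) (hq2 : q ≤ π.size) (hr1 : 1 ≤ r) (hr2 : r ≤ π.size)
    (hs1 : 1 ≤ s) (hs2 : s ≤ π.size)
    (hqr : q ≠ r) (hqs : q ≠ s) (hrs : r ≠ s)
    (hq : π.p q = x) (hr : π.p r = x) (hs : π.p s = x) : False := by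
  have hsub : ({q, r, s} : Finset ℕ) ⊆ (Finset.Icc 1 π.size).filter (fun i => π.p i = x) := by
    intro i hi
    rw [Finset.mem_insert, Finset.mem_insert, Finset.mem_singleton] at hi
    rcases hi with rfl | rfl | rfl
    · exact Finset.mem_filter.2 ⟨Finset.mem_Icc.2 ⟨hq1, hq2⟩, hq⟩
    · exact Finset.mem_filter.2 ⟨Finset.mem_Icc.2 ⟨hr1, hr2⟩, hr⟩
    · exact Finset.mem_filter.2 ⟨Finset.mem_Icc.2 ⟨hs1, hs2⟩, hs⟩
  have hcard : ({q, r, s} : Finset ℕ).card = 3 := by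
    rw [Finset.card_insert_of_notMem (by simp [hqr, hqs]),
      Finset.card_insert_of_notMem (by simp [hrs]), Finset.card_singleton]
  have h32 : (3 : ℕ) ≤ 2 := by
    calc (3:ℕ) = ({q, r, s} : Finset ℕ).card := hcard.symm
    _ ≤ ((Finset.Icc 1 π.size).filter (fun i => π.p i = x)).card := Finset.card_le_card hsub
    _ = 2 := π.double x
  omega

lemma count_val_le_one (S : Finset A) (x : A) : S.val.count x ≤ 1 :=
  (Multiset.nodup_iff_count_le_one.1 S.nodup) x

lemma count_setsum_le_one {S T : Finset A} (hST : Disjoint S T) (x : A) :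
    (S.val + T.val).count x ≤ 1 := by
  rw [Multiset.count_add]
  by_cases hx : x ∈ S
  · have hxT : x ∉ T := fun hT => Finset.disjoint_left.1 hST hx hT
    have : T.val.count x = 0 := Multiset.count_eq_zero.2 (by rwa [Finset.mem_val])
    have h1 := count_val_le_one S x
    omega
  · have : S.val.count x = 0 := Multiset.count_eq_zero.2 (by rwa [Finset.mem_val])
    have h1 := count_val_le_one T x
    omega

lemma mem_setsum {S T : Finset A} {x : A} : x ∈ S.val + T.val ↔ x ∈ S ∨ x ∈ T := by
  rw [Multiset.mem_add, Finset.mem_val, Finset.mem_val]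

lemma mem_seg_of_pos {π : GenPerm A} {a b q : ℕ} (h1 : a ≤ q) (h2 : q ≤ b) :
    π.p q ∈ π.seg a b :=
  Multiset.mem_map_of_mem _ (Finset.mem_Icc.2 ⟨h1, h2⟩)

lemma exists_pos_of_mem_seg {π : GenPerm A} {a b : ℕ} {x : A} (h : x ∈ π.seg a b) :
    ∃ q, a ≤ q ∧ q ≤ b ∧ π.p q = x := by
  unfold seg at h
  rw [Multiset.mem_map] at h
  obtain ⟨q, hq, he⟩ := h
  rw [Finset.mem_val, Finset.mem_Icc] at hq
  exact ⟨q, hq.1, hq.2, he⟩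

lemma exists_pos_corner {π : GenPerm A} {a b : ℕ} {S T : Finset A} {x : A}
    (e : π.seg a b = S.val + T.val) (hx : x ∈ S ∨ x ∈ T) :
    ∃ q, a ≤ q ∧ q ≤ b ∧ π.p q = x :=
  exists_pos_of_mem_seg (by rw [e]; exact mem_setsum.2 hx)

lemma mem_corner {π : GenPerm A} {a b q : ℕ} {S T : Finset A}
    (e : π.seg a b = S.val + T.val) (h1 : a ≤ q) (h2 : q ≤ b) :
    π.p q ∈ S ∨ π.p q ∈ T :=
  mem_setsum.1 (e ▸ mem_seg_of_pos h1 h2)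

lemma corner_two_contra {π : GenPerm A} {a b q r : ℕ} {S T : Finset A} {x : A}
    (e : π.seg a b = S.val + T.val) (hST : Disjoint S T) (hqr : q ≠ r)
    (haq : a ≤ q) (hqb : q ≤ b) (har : a ≤ r) (hrb : r ≤ b)
    (hq : π.p q = x) (hr : π.p r = x) : False := by
  have h2 := count_ge_two hqr haq hqb har hrb hq hr
  rw [e] at h2
  have h1 := count_setsum_le_one hST x
  omega

lemma setsum_eq_zero {S T : Finset A} (h : S.val + T.val = 0) : S = ∅ ∧ T = ∅ := by
  have hc := congrArg Multiset.card h
  rw [Multiset.card_add] at hc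
  simp only [Multiset.card_zero] at hc
  constructor
  · exact Finset.card_eq_zero.1 (by change Multiset.card S.val = 0; omega)
  · exact Finset.card_eq_zero.1 (by change Multiset.card T.val = 0; omega)

lemma setsum_ne_zero_left {S : Finset A} (T : Finset A) (h : S ≠ ∅) : S.val + T.val ≠ 0 :=
  fun hz => h (setsum_eq_zero hz).1

lemma setsum_ne_zero_right (S : Finset A) {T : Finset A} (h : T ≠ ∅) : S.val + T.val ≠ 0 :=
  fun hz => h (setsum_eq_zero hz).2

lemma val_cons_erase {S : Finset A} {z : A} (hz : z ∈ S) : (S.erase z).val + {z} = S.val := by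
  rw [add_comm, Multiset.singleton_add, Finset.erase_val,
    Multiset.cons_erase (s := S.val) hz]

lemma val_insert {T : Finset A} {z : A} (hz : z ∉ T) : (insert z T).val = T.val + {z} := by
  rw [Finset.insert_val_of_notMem hz, add_comm, Multiset.singleton_add]

lemma sum_insert_erase {S T : Finset A} {z : A} (hzS : z ∈ S) (hzT : z ∉ T) :
    (S.erase z).val + (insert z T).val = S.val + T.val := by
  rw [val_insert hzT, ← val_cons_erase hzS]
  abel

lemma cancel_z {m : Multiset A} {S T : Finset A} {z : A} (hz : z ∈ S)
    (h : m + {z} = S.val + T.val) : m = (S.erase z).val + T.val := by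
  have h1 : (S.erase z).val + T.val + {z} = S.val + T.val := by
    rw [← val_cons_erase hz]
    abel
  exact add_right_cancel (h.trans h1.symm)

lemma cancel_z' {m : Multiset A} {S T : Finset A} {z : A} (hz : z ∈ T)
    (h : m + {z} = S.val + T.val) : m = S.val + (T.erase z).val := by
  have h2 : m + {z} = T.val + S.val := by rw [h, add_comm]
  have := cancel_z hz h2
  rw [this, add_comm]

lemma reducible_mk (π : GenPerm A) (As Bs Cs Ds : Finset A) (i1 i2 i3 i4 : ℕ)
    (dAB : Disjoint As Bs) (dAC : Disjoint As Cs) (dAD : Disjoint As Ds)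
    (dBC : Disjoint Bs Cs) (dBD : Disjoint Bs Ds) (dCD : Disjoint Cs Ds)
    (hne : ¬(As = ∅ ∧ Bs = ∅ ∧ Cs = ∅ ∧ Ds = ∅))
    (h12 : i1 ≤ i2) (h2l : i2 ≤ π.l) (hl3 : π.l ≤ i3) (h34 : i3 ≤ i4) (h4s : i4 ≤ π.size)
    (e1 : π.seg 1 i1 = As.val + Bs.val) (e2 : π.seg (i2 + 1) π.l = Ds.val + Bs.val)
    (e3 : π.seg (π.l + 1) i3 = As.val + Cs.val) (e4 : π.seg (i4 + 1) π.size = Ds.val + Cs.val)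
    (h2 : π.seg (i2 + 1) π.l ≠ 0) (h4 : π.seg (i4 + 1) π.size ≠ 0) : π.Reducible := by
  refine ⟨As, Bs, Cs, Ds, i1, i2, i3, i4, dAB, dAC, dAD, dBC, dBD, dCD, hne,
    h12, h2l, hl3, h34, h4s, e1, e2, e3, e4, ?_⟩
  by_cases g1 : π.seg 1 i1 = 0 <;> by_cases g3 : π.seg (π.l + 1) i3 = 0
  · exact Or.inr (Or.inr (Or.inr (Or.inl ⟨g1, h2, g3, h4⟩)))
  · exact Or.inr (Or.inl ⟨g1, h2, g3, h4⟩)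
  · exact Or.inr (Or.inr (Or.inl ⟨g1, h2, g3, h4⟩))
  · exact Or.inl ⟨g1, h2, g3, h4⟩

lemma reducible_mk5 (π : GenPerm A) (As : Finset A) (i1 i3 : ℕ)
    (hA : As ≠ ∅) (h1l : i1 ≤ π.l) (hl3 : π.l ≤ i3) (h3s : i3 ≤ π.size)
    (e1 : π.seg 1 i1 = As.val) (e3 : π.seg (π.l + 1) i3 = As.val) : π.Reducible := by
  have hAv : As.val ≠ 0 := fun hz => hA (Finset.val_eq_zero.1 hz)
  refine ⟨As, ∅, ∅, ∅, i1, π.l, i3, π.size, ?_, ?_, ?_, ?_, ?_, ?_,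
    by simp [hA], h1l, le_refl _, hl3, h3s, le_refl _, by simpa using e1,
    by simp [seg_eq_zero], by simpa using e3, by simp [seg_eq_zero], ?_⟩
  · exact Finset.disjoint_empty_right _
  · exact Finset.disjoint_empty_right _
  · exact Finset.disjoint_empty_right _
  · exact Finset.disjoint_empty_right _
  · exact Finset.disjoint_empty_right _
  · exact Finset.disjoint_empty_right _
  · right; right; right; right
    refine ⟨by rw [e1]; exact hAv, by simp [seg_eq_zero], by rw [e3]; exact hAv,
      by simp [seg_eq_zero]⟩

end GenPerm
/-- If `π` is an irreducible generalized permutation satisfying the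
convention and `R_ε(π)` is defined (`ε ∈ {0,1}`), then `R_ε(π)` is irreducible. -/
theorem rauzy_preserves_irreducible {A : Type*} [DecidableEq A] (π : GenPerm A)
    (hconv : π.Convention) (h : π.Irreducible) (π' : GenPerm A)
    (hstep : IsR0 π π' ∨ IsR1 π π') : π'.Irreducible := by
  intro hred'
  obtain ⟨As, Bs, Cs, Ds, i1, i2, i3, i4, dAB, dAC, dAD, dBC, dBD, dCD, hne,
    h12, h2l, hl3, h34, h4s, E1, E2, E3, E4, HP⟩ := hred'
  obtain ⟨⟨ca1, ca2, ⟨hca11, hca12, hca21, hca22, hcane, hcaeq⟩, hcal1, hcal2⟩,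
    ⟨cb1, cb2, ⟨hcb11, hcb12, hcb21, hcb22, hcbne, hcbeq⟩, hcbl1, hcbl2⟩⟩ := hconv
  have hszdef : π.size = π.l + π.m := rfl
  have hl2 : 2 ≤ π.l := by omega
  have hm2 : 2 ≤ π.m := by omega
  rcases hstep with hR0 | hR1
  · rcases hR0 with ⟨t, ⟨htw1, htw2, htw3, htw4, htwne, htweq⟩, hlt, hnelz, hl', hm', hid, hz, hshift⟩ |
      ⟨t, ⟨htw1, htw2, htw3, htw4, htwne, htweq⟩, hlt, _hbot, hl', hm', hid, hz, hshift⟩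
    · -- R0, first case : t = σ(l) > l, type preserved
      have htls : t < π.size := by
        rcases Nat.lt_or_ge t π.size with hc | hc
        · exact hc
        · exfalso
          have : t = π.size := by omega
          rw [this] at htweq
          exact hnelz htweq
      have hsz' : π'.size = π.size := by unfold GenPerm.size; rw [hl', hm']
      rw [hl'] at h2l hl3 E2 E3 HP
      rw [hsz'] at h4s E4 HP
      have hT1 : ∀ a b : ℕ, 1 ≤ a → b ≤ t → π'.seg a b = π.seg a b := by
        intro a b ha hb
        exact GenPerm.seg_eqOn (fun i hi1 hi2 => hid i (by omega) (by omega))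
      have pwl : π'.p π.l = π.p π.l := hid π.l (by omega) (by omega)
      have pwt : π'.p t = π.p π.l := by rw [hid t (by omega) le_rfl]; exact htweq.symm
      by_cases hc3 : i4 ≤ t
      · -- direct transfer
        have q1 : π'.seg 1 i1 = π.seg 1 i1 := hT1 1 i1 le_rfl (by omega)
        have q2 : π'.seg (i2 + 1) π.l = π.seg (i2 + 1) π.l := hT1 _ _ (by omega) (by omega)
        have q3 : π'.seg (π.l + 1) i3 = π.seg (π.l + 1) i3 := hT1 _ _ (by omega) (by omega)
        have q4 : π'.seg (i4 + 1) π.size = π.seg (i4 + 1) π.size := by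
          have g1 : π'.seg (i4 + 1) π.size = π.seg (i4 + 1) (π.size - 1) + {π.p π.size} :=
            GenPerm.seg_insert_pred (u := t + 1) (by omega) (by omega) (by omega)
              (fun i hi1 hi2 => hid i (by omega) (by omega)) hz
              (fun i hi1 hi2 => hshift i hi1 hi2)
          have g2 : π.seg (i4 + 1) π.size = π.seg (i4 + 1) (π.size - 1) + {π.p π.size} := by
            have g3 := π.seg_split (a := i4 + 1) (b := π.size) (π.size - 1) (by omega) (by omega)
            rw [show π.size - 1 + 1 = π.size by omega] at g3
            rw [g3, GenPerm.seg_single]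
          rw [g1, ← g2]
        rw [q1] at E1 HP
        rw [q2] at E2 HP
        rw [q3] at E3 HP
        rw [q4] at E4 HP
        exact h ⟨As, Bs, Cs, Ds, i1, i2, i3, i4, dAB, dAC, dAD, dBC, dBD, dCD, hne,
          h12, h2l, hl3, h34, h4s, E1, E2, E3, E4, HP⟩
      · by_cases hc2 : i3 ≤ t
        · -- i3 ≤ t < i4
          by_cases hi2 : i2 < π.l
          · have wmem : π.p π.l ∈ Ds ∨ π.p π.l ∈ Bs := by
              have := GenPerm.mem_corner E2 (q := π.l) (by omega) le_rfl
              rwa [pwl] at this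
            by_cases ht3 : t ≤ i3
            · have wmem2 : π.p π.l ∈ As ∨ π.p π.l ∈ Cs := by
                have := GenPerm.mem_corner E3 (q := t) (by omega) ht3
                rwa [pwt] at this
              rcases wmem with hD | hB <;> rcases wmem2 with hA | hC
              · exact Finset.disjoint_left.1 dAD hA hD
              · exact Finset.disjoint_left.1 dCD hC hD
              · exact Finset.disjoint_left.1 dAB hA hB
              · exact Finset.disjoint_left.1 dBC hB hC
            · rcases wmem with hD | hB
              · obtain ⟨q, hq1, hq2, hq3⟩ := GenPerm.exists_pos_corner E4 (Or.inl hD)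
                exact GenPerm.three_pos_contra (π := π') (by omega) (by omega) (by omega)
                  (by omega) (by omega) (by omega) (by omega) (by omega) (by omega)
                  hq3 pwt pwl
              · obtain ⟨q, hq1, hq2, hq3⟩ := GenPerm.exists_pos_corner E1 (Or.inr hB)
                exact GenPerm.three_pos_contra (π := π') (by omega) (by omega) (by omega)
                  (by omega) (by omega) (by omega) (by omega) (by omega) (by omega)
                  hq3 pwt pwl
          · -- i2 = π.l, pattern P5
            have hi2e : i2 = π.l := by omega
            have hseg2 : π'.seg (i2 + 1) π.l = 0 := by
              rw [hi2e]; exact GenPerm.seg_eq_zero (by omega)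
            have hP5 : π'.seg 1 i1 ≠ 0 ∧ π'.seg (π.l + 1) i3 ≠ 0 ∧
                π'.seg (i4 + 1) π.size = 0 := by
              rcases HP with ⟨a, b, c, d⟩ | ⟨a, b, c, d⟩ | ⟨a, b, c, d⟩ | ⟨a, b, c, d⟩ | ⟨a, b, c, d⟩
              · exact absurd hseg2 b
              · exact absurd hseg2 b
              · exact absurd hseg2 b
              · exact absurd hseg2 b
              · exact ⟨a, c, d⟩
            have hBD := GenPerm.setsum_eq_zero (E2.symm.trans hseg2)
            have hDC := GenPerm.setsum_eq_zero (E4.symm.trans hP5.2.2)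
            have hi4e : i4 = π.size := by
              have := GenPerm.seg_eq_zero_iff.1 hP5.2.2; omega
            have hAne : As ≠ ∅ := fun hA => hne ⟨hA, hBD.2, hDC.2, hBD.1⟩
            have e1 : π.seg 1 i1 = As.val := by
              rw [← hT1 1 i1 le_rfl (by omega), E1, hBD.2]; simp
            have e3 : π.seg (π.l + 1) i3 = As.val := by
              rw [← hT1 (π.l + 1) i3 (by omega) hc2, E3, hDC.2]; simp
            exact h (GenPerm.reducible_mk5 π As i1 i3 hAne (by omega) (by omega) (by omega) e1 e3)
        · -- t < i3 : w ∈ As ∪ Cs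
          have wmem3 : π.p π.l ∈ As ∨ π.p π.l ∈ Cs := by
            have := GenPerm.mem_corner E3 (q := t) (by omega) (by omega)
            rwa [pwt] at this
          by_cases hi2 : i2 < π.l
          · have wmem : π.p π.l ∈ Ds ∨ π.p π.l ∈ Bs := by
              have := GenPerm.mem_corner E2 (q := π.l) (by omega) le_rfl
              rwa [pwl] at this
            rcases wmem with hD | hB <;> rcases wmem3 with hA | hC
            · exact Finset.disjoint_left.1 dAD hA hD
            · exact Finset.disjoint_left.1 dCD hC hD
            · exact Finset.disjoint_left.1 dAB hA hB
            · exact Finset.disjoint_left.1 dBC hB hC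
          · have hi2e : i2 = π.l := by omega
            have hseg2 : π'.seg (i2 + 1) π.l = 0 := by
              rw [hi2e]; exact GenPerm.seg_eq_zero (by omega)
            have hP5 : π'.seg 1 i1 ≠ 0 ∧ π'.seg (π.l + 1) i3 ≠ 0 ∧
                π'.seg (i4 + 1) π.size = 0 := by
              rcases HP with ⟨a, b, c, d⟩ | ⟨a, b, c, d⟩ | ⟨a, b, c, d⟩ | ⟨a, b, c, d⟩ | ⟨a, b, c, d⟩
              · exact absurd hseg2 b
              · exact absurd hseg2 b
              · exact absurd hseg2 b
              · exact absurd hseg2 b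
              · exact ⟨a, c, d⟩
            have hBD := GenPerm.setsum_eq_zero (E2.symm.trans hseg2)
            have hDC := GenPerm.setsum_eq_zero (E4.symm.trans hP5.2.2)
            have hwA : π.p π.l ∈ As := by
              rcases wmem3 with hA | hC
              · exact hA
              · rw [hDC.2] at hC; exact absurd hC (Finset.notMem_empty _)
            obtain ⟨q, hq1, hq2, hq3⟩ := GenPerm.exists_pos_corner E1 (Or.inl hwA)
            by_cases hql : q = π.l
            · have hi1e : i1 = π.l := by omega
              have e1 : π.seg 1 π.l = As.val := by
                rw [← hi1e, ← hT1 1 i1 le_rfl (by omega), E1, hBD.2]; simp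
              have hcnt2 : 2 ≤ (π.seg 1 π.l).count (π.p ca1) :=
                GenPerm.count_ge_two hcane (by omega) hcal1 (by omega) hcal2 rfl hcaeq.symm
              rw [e1] at hcnt2
              have := GenPerm.count_val_le_one As (π.p ca1)
              omega
            · exact GenPerm.three_pos_contra (π := π') (by omega) (by omega) (by omega)
                (by omega) (by omega) (by omega) (by omega) (by omega) (by omega)
                hq3 pwt pwl
    · -- R0, second case : t = σ(l) ≤ l, type (l+1, m-1)
      have htl : t < π.l := by omega
      have hsz' : π'.size = π.size := by unfold GenPerm.size; rw [hl', hm']; omega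
      rw [hl'] at h2l hl3 E2 E3 HP
      rw [hsz'] at h4s E4 HP
      have pt1 : π'.p (t + 1) = π.p π.l := by
        rw [hshift (t + 1) (by omega) (by omega)]
        exact htweq.symm
      have pl1 : π'.p (π.l + 1) = π.p π.l := by
        have g := hshift (π.l + 1) (by omega) (by omega)
        rwa [show π.l + 1 - 1 = π.l by omega] at g
      have e3π : π.seg (π.l + 1) (i3 - 1) = As.val + Cs.val := by
        rw [← E3]
        have g := GenPerm.seg_shift_pred (π := π) (π' := π') (a := π.l + 1 + 1) (b := i3)
          (by omega) (by omega) (fun i hi1 hi2 => hshift i (by omega) (by omega))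
        rw [show π.l + 1 + 1 - 1 = π.l + 1 by omega] at g
        exact g.symm
      have e4π : π.seg i4 (π.size - 1) = Ds.val + Cs.val := by
        rw [← E4]
        have g := GenPerm.seg_shift_pred (π := π) (π' := π') (a := i4 + 1) (b := π.size)
          (by omega) (by omega) (fun i hi1 hi2 => hshift i (by omega) (by omega))
        rw [show i4 + 1 - 1 = i4 by omega] at g
        exact g.symm
      by_cases hca : i2 ≤ t
      · -- two occurrences of w in the top-right corner
        exact GenPerm.corner_two_contra E2 dBD.symm (show t + 1 ≠ π.l + 1 by omega)
          (by omega) (by omega) (by omega) le_rfl pt1 pl1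
      · -- t < i2
        have e2π : π.seg i2 π.l = Ds.val + Bs.val := by
          rw [← E2]
          have g := GenPerm.seg_shift_pred (π := π) (π' := π') (a := i2 + 1) (b := π.l + 1)
            (by omega) (by omega) (fun i hi1 hi2 => hshift i (by omega) (by omega))
          rw [show i2 + 1 - 1 = i2 by omega, show π.l + 1 - 1 = π.l by omega] at g
          exact g.symm
        by_cases hal : t ≤ i1
        · -- z inserted within the top-left corner
          have zmem : π.p π.size ∈ As ∨ π.p π.size ∈ Bs := by
            have := GenPerm.mem_corner E1 (q := t) (by omega) hal
            rwa [hz] at this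
          have e1π : π.seg 1 (i1 - 1) + {π.p π.size} = As.val + Bs.val := by
            rw [← E1]
            exact (GenPerm.seg_insert_pred (u := t) (by omega) (by omega) hal
              (fun i hi1 hi2 => hid i (by omega) hi2) hz
              (fun i hi1 hi2 => hshift i hi1 (by omega))).symm
          rcases zmem with hzA | hzB
          · -- z ∈ As
            have hzC : π.p π.size ∉ Cs := Finset.disjoint_left.1 dAC hzA
            by_cases hDB : π'.seg (i2 + 1) (π.l + 1) = 0
            · -- P5 special case
              have hP5 : π'.seg 1 i1 ≠ 0 ∧ π'.seg (π.l + 1 + 1) i3 ≠ 0 ∧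
                  π'.seg (i4 + 1) π.size = 0 := by
                rcases HP with ⟨a, b, c, d⟩ | ⟨a, b, c, d⟩ | ⟨a, b, c, d⟩ | ⟨a, b, c, d⟩ | ⟨a, b, c, d⟩
                · exact absurd hDB b
                · exact absurd hDB b
                · exact absurd hDB b
                · exact absurd hDB b
                · exact ⟨a, c, d⟩
              have hBD := GenPerm.setsum_eq_zero (E2.symm.trans hDB)
              have hDC := GenPerm.setsum_eq_zero (E4.symm.trans hP5.2.2)
              have hi4e : i4 = π.size := by
                have := GenPerm.seg_eq_zero_iff.1 hP5.2.2; omega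
              by_cases hti1 : t = i1
              · -- special reducibility decomposition for π
                have hwA : π.p π.l ∉ As := by
                  intro hw
                  obtain ⟨q, hq1, hq2, hq3⟩ := GenPerm.exists_pos_corner E1 (Or.inl hw)
                  exact GenPerm.three_pos_contra (π := π') (by omega) (by omega) (by omega)
                    (by omega) (by omega) (by omega) (by omega) (by omega) (by omega)
                    hq3 pt1 pl1
                have hwz : π.p π.l ≠ π.p π.size := by
                  intro he
                  refine GenPerm.three_pos_contra (π := π') (q := t) (r := t + 1)
                    (s := π.l + 1) (x := π.p π.l) (by omega) (by omega) (by omega)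
                    (by omega) (by omega) (by omega) (by omega) (by omega) (by omega)
                    ?_ pt1 pl1
                  rw [hz, ← he]
                have f1 : π.seg 1 i1 = (As.erase (π.p π.size)).val +
                    ({π.p π.l} : Finset A).val := by
                  have g1 : π.seg 1 (i1 - 1) = (As.erase (π.p π.size)).val := by
                    rw [hBD.2] at e1π
                    have := GenPerm.cancel_z hzA e1π
                    simpa using this
                  have g2 : π.seg 1 i1 = π.seg 1 (i1 - 1) + {π.p i1} := by
                    have g3 := π.seg_split (a := 1) (b := i1) (i1 - 1) (by omega) (by omega)
                    rw [show i1 - 1 + 1 = i1 by omega] at g3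
                    rw [g3, GenPerm.seg_single]
                  rw [g2, g1, show i1 = t from hti1.symm, ← htweq]
                  simp
                have f2 : π.seg (π.l - 1 + 1) π.l = (∅ : Finset A).val +
                    ({π.p π.l} : Finset A).val := by
                  rw [show π.l - 1 + 1 = π.l by omega, GenPerm.seg_single]; simp
                have f3 : π.seg (π.l + 1) (i3 - 1) = (As.erase (π.p π.size)).val +
                    ({π.p π.size} : Finset A).val := by
                  rw [e3π, hDC.2]
                  simp only [Finset.empty_val, Multiset.empty_eq_zero, add_zero,
                    Finset.singleton_val]
                  exact (GenPerm.val_cons_erase hzA).symm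
                have f4 : π.seg (π.size - 1 + 1) π.size = (∅ : Finset A).val +
                    ({π.p π.size} : Finset A).val := by
                  rw [show π.size - 1 + 1 = π.size by omega, GenPerm.seg_single]; simp
                refine h (GenPerm.reducible_mk π (As.erase (π.p π.size)) {π.p π.l}
                  {π.p π.size} ∅ i1 (π.l - 1) (i3 - 1) (π.size - 1) ?_ ?_ ?_ ?_ ?_ ?_
                  (by simp) (by omega) (by omega) (by omega) (by omega) (by omega)
                  f1 f2 f3 f4 (by rw [f2]; simp) (by rw [f4]; simp))
                · exact Finset.disjoint_singleton_right.2
                    (fun hw => hwA (Finset.mem_of_mem_erase hw))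
                · exact Finset.disjoint_singleton_right.2 (Finset.notMem_erase _ _)
                · exact Finset.disjoint_empty_right _
                · exact Finset.disjoint_singleton_right.2
                    (by simp only [Finset.mem_singleton]; exact fun he => hwz he.symm)
                · exact Finset.disjoint_empty_right _
                · exact Finset.disjoint_empty_right _
              · -- t < i1 : contradiction
                have wmem : π.p π.l ∈ As ∨ π.p π.l ∈ Bs := by
                  have := GenPerm.mem_corner E1 (q := t + 1) (by omega) (by omega)
                  rwa [pt1] at this
                have hwA : π.p π.l ∈ As := by
                  rcases wmem with hA | hB
                  · exact hA
                  · rw [hBD.2] at hB; exact absurd hB (Finset.notMem_empty _)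
                obtain ⟨q, hq1, hq2, hq3⟩ := GenPerm.exists_pos_corner E3 (Or.inl hwA)
                exact GenPerm.three_pos_contra (π := π') (by omega) (by omega) (by omega)
                  (by omega) (by omega) (by omega) (by omega) (by omega) (by omega)
                  hq3 pt1 pl1
            · -- main decomposition, z ∈ As
              have hi4 : i4 < π.size := by
                by_contra hcon
                have h4z : π'.seg (i4 + 1) π.size = 0 :=
                  GenPerm.seg_eq_zero (by omega)
                rcases HP with ⟨a, b, c, d⟩ | ⟨a, b, c, d⟩ | ⟨a, b, c, d⟩ | ⟨a, b, c, d⟩ | ⟨a, b, c, d⟩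
                · exact d h4z
                · exact d h4z
                · exact d h4z
                · exact d h4z
                · exact hDB b
              have f1 : π.seg 1 (i1 - 1) = (As.erase (π.p π.size)).val + Bs.val :=
                GenPerm.cancel_z hzA e1π
              have f2 : π.seg (i2 - 1 + 1) π.l = Ds.val + Bs.val := by
                rw [show i2 - 1 + 1 = i2 by omega]; exact e2π
              have f3 : π.seg (π.l + 1) (i3 - 1) = (As.erase (π.p π.size)).val +
                  (insert (π.p π.size) Cs).val := by
                rw [e3π, ← GenPerm.sum_insert_erase hzA hzC]
              have f4 : π.seg (i4 - 1 + 1) π.size = Ds.val + (insert (π.p π.size) Cs).val := by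
                rw [show i4 - 1 + 1 = i4 by omega]
                have g3 := π.seg_split (a := i4) (b := π.size) (π.size - 1) (by omega) (by omega)
                rw [show π.size - 1 + 1 = π.size by omega] at g3
                rw [g3, GenPerm.seg_single, e4π, GenPerm.val_insert hzC, ← add_assoc]
              refine h (GenPerm.reducible_mk π (As.erase (π.p π.size)) Bs
                (insert (π.p π.size) Cs) Ds (i1 - 1) (i2 - 1) (i3 - 1) (i4 - 1)
                ?_ ?_ ?_ ?_ ?_ ?_ (by simp) (by omega) (by omega) (by omega) (by omega)
                (by omega) f1 f2 f3 f4
                (by rw [f2]; intro hcon; exact hDB (E2.trans hcon))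
                (by rw [f4]; exact GenPerm.setsum_ne_zero_right _ (Finset.insert_ne_empty _ _)))
              · exact Finset.disjoint_of_subset_left (Finset.erase_subset _ _) dAB
              · exact Finset.disjoint_insert_right.2 ⟨Finset.notMem_erase _ _,
                  Finset.disjoint_of_subset_left (Finset.erase_subset _ _) dAC⟩
              · exact Finset.disjoint_of_subset_left (Finset.erase_subset _ _) dAD
              · exact Finset.disjoint_insert_right.2
                  ⟨Finset.disjoint_left.1 dAB hzA, dBC⟩
              · exact dBD
              · exact Finset.disjoint_insert_left.2
                  ⟨Finset.disjoint_left.1 dAD hzA, dCD⟩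
          · -- z ∈ Bs
            have hzD : π.p π.size ∉ Ds := Finset.disjoint_left.1 dBD hzB
            have hi4 : i4 < π.size := by
              by_contra hcon
              have h4z : π'.seg (i4 + 1) π.size = 0 := GenPerm.seg_eq_zero (by omega)
              have hP5 : π'.seg (i2 + 1) (π.l + 1) = 0 := by
                rcases HP with ⟨a, b, c, d⟩ | ⟨a, b, c, d⟩ | ⟨a, b, c, d⟩ | ⟨a, b, c, d⟩ | ⟨a, b, c, d⟩
                · exact absurd h4z d
                · exact absurd h4z d
                · exact absurd h4z d
                · exact absurd h4z d
                · exact b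
              have hBD := GenPerm.setsum_eq_zero (E2.symm.trans hP5)
              rw [hBD.2] at hzB
              exact absurd hzB (Finset.notMem_empty _)
            have f1 : π.seg 1 (i1 - 1) = As.val + (Bs.erase (π.p π.size)).val :=
              GenPerm.cancel_z' hzB e1π
            have f2 : π.seg (i2 - 1 + 1) π.l = (insert (π.p π.size) Ds).val +
                (Bs.erase (π.p π.size)).val := by
              rw [show i2 - 1 + 1 = i2 by omega, e2π]
              calc Ds.val + Bs.val = Bs.val + Ds.val := add_comm _ _
                _ = (Bs.erase (π.p π.size)).val + (insert (π.p π.size) Ds).val :=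
                    (GenPerm.sum_insert_erase hzB hzD).symm
                _ = _ := add_comm _ _
            have f4 : π.seg (i4 - 1 + 1) π.size = (insert (π.p π.size) Ds).val + Cs.val := by
              rw [show i4 - 1 + 1 = i4 by omega]
              have g3 := π.seg_split (a := i4) (b := π.size) (π.size - 1) (by omega) (by omega)
              rw [show π.size - 1 + 1 = π.size by omega] at g3
              rw [g3, GenPerm.seg_single, e4π, GenPerm.val_insert hzD]
              abel
            refine h (GenPerm.reducible_mk π As (Bs.erase (π.p π.size)) Cs
              (insert (π.p π.size) Ds) (i1 - 1) (i2 - 1) (i3 - 1) (i4 - 1)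
              ?_ ?_ ?_ ?_ ?_ ?_ ?_ (by omega) (by omega) (by omega) (by omega)
              (by omega) f1 f2 e3π f4 ?_ ?_)
            · exact Finset.disjoint_of_subset_right (Finset.erase_subset _ _) dAB
            · exact dAC
            · exact Finset.disjoint_insert_right.2
                ⟨fun hA => Finset.disjoint_left.1 dAB hA hzB, dAD⟩
            · exact Finset.disjoint_of_subset_left (Finset.erase_subset _ _) dBC
            · exact Finset.disjoint_insert_right.2 ⟨Finset.notMem_erase _ _,
                Finset.disjoint_of_subset_left (Finset.erase_subset _ _) dBD⟩
            · exact Finset.disjoint_insert_right.2 ⟨Finset.disjoint_left.1 dBC hzB, dCD⟩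
            · simp [Finset.insert_ne_empty]
            · rw [f2]; exact GenPerm.setsum_ne_zero_left _ (Finset.insert_ne_empty _ _)
            · rw [f4]; exact GenPerm.setsum_ne_zero_left _ (Finset.insert_ne_empty _ _)
        · -- i1 < t < i2
          by_cases hi2l : i2 ≤ π.l
          · have wmem : π.p π.l ∈ Ds ∨ π.p π.l ∈ Bs := by
              have := GenPerm.mem_corner E2 (q := π.l + 1) (by omega) le_rfl
              rwa [pl1] at this
            rcases wmem with hD | hB
            · obtain ⟨q, hq1, hq2, hq3⟩ := GenPerm.exists_pos_corner E4 (Or.inl hD)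
              exact GenPerm.three_pos_contra (π := π') (by omega) (by omega) (by omega)
                (by omega) (by omega) (by omega) (by omega) (by omega) (by omega)
                hq3 pt1 pl1
            · obtain ⟨q, hq1, hq2, hq3⟩ := GenPerm.exists_pos_corner E1 (Or.inr hB)
              exact GenPerm.three_pos_contra (π := π') (by omega) (by omega) (by omega)
                (by omega) (by omega) (by omega) (by omega) (by omega) (by omega)
                hq3 pt1 pl1
          · -- i2 = π.l + 1 : pattern P5
            have hi2e : i2 = π.l + 1 := by omega
            have hseg2 : π'.seg (i2 + 1) (π.l + 1) = 0 := by
              rw [hi2e]; exact GenPerm.seg_eq_zero (by omega)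
            have hP5 : π'.seg 1 i1 ≠ 0 ∧ π'.seg (π.l + 1 + 1) i3 ≠ 0 ∧
                π'.seg (i4 + 1) π.size = 0 := by
              rcases HP with ⟨a, b, c, d⟩ | ⟨a, b, c, d⟩ | ⟨a, b, c, d⟩ | ⟨a, b, c, d⟩ | ⟨a, b, c, d⟩
              · exact absurd hseg2 b
              · exact absurd hseg2 b
              · exact absurd hseg2 b
              · exact absurd hseg2 b
              · exact ⟨a, c, d⟩
            have hBD := GenPerm.setsum_eq_zero (E2.symm.trans hseg2)
            have hDC := GenPerm.setsum_eq_zero (E4.symm.trans hP5.2.2)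
            have hAne : As ≠ ∅ := fun hA => hne ⟨hA, hBD.2, hDC.2, hBD.1⟩
            have e1 : π.seg 1 i1 = As.val := by
              rw [← GenPerm.seg_eqOn (π := π) (π' := π') (a := 1) (b := i1)
                (fun i hi1 hi2 => hid i hi1 (by omega)), E1, hBD.2]
              simp
            have e3 : π.seg (π.l + 1) (i3 - 1) = As.val := by
              rw [e3π, hDC.2]; simp
            exact h (GenPerm.reducible_mk5 π As i1 (i3 - 1) hAne (by omega) (by omega)
              (by omega) e1 e3)
  · rcases hR1 with ⟨t, ⟨htw1, htw2, htw3, htw4, htwne, htweq⟩, htl, hnelz, hl', hm', hz, hshift, hid⟩ |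
      ⟨t, ⟨htw1, htw2, htw3, htw4, htwne, htweq⟩, hlt, _htop, hl', hm', hshift, hz, hid⟩
    · -- R1, first case : t = σ(2d) ≤ l, type preserved
      have htll : t < π.l := by
        rcases Nat.lt_or_ge t π.l with hc | hc
        · exact hc
        · exfalso
          have : t = π.l := by omega
          rw [this] at htweq
          exact hnelz htweq.symm
      have hsz' : π'.size = π.size := by unfold GenPerm.size; rw [hl', hm']
      rw [hl'] at h2l hl3 E2 E3 HP
      rw [hsz'] at h4s E4 HP
      have pwt : π'.p t = π.p π.size := by
        rw [hid t htw3 (by omega) (Or.inl le_rfl)]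
        exact htweq.symm
      have pws : π'.p π.size = π.p π.size := hid π.size (by omega) le_rfl (Or.inr (by omega))
      have hT1 : ∀ a b : ℕ, 1 ≤ a → b ≤ t → π'.seg a b = π.seg a b := by
        intro a b ha hb
        exact GenPerm.seg_eqOn (fun i hi1 hi2 => hid i (by omega) (by omega) (Or.inl (by omega)))
      have hT4 : ∀ a b : ℕ, π.l < a → b ≤ π.size → π'.seg a b = π.seg a b := by
        intro a b ha hb
        exact GenPerm.seg_eqOn (fun i hi1 hi2 => hid i (by omega) (by omega) (Or.inr (by omega)))
      by_cases hc : i2 ≤ t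
      · -- direct transfer
        have q1 : π'.seg 1 i1 = π.seg 1 i1 := hT1 1 i1 le_rfl (by omega)
        have q2 : π'.seg (i2 + 1) π.l = π.seg (i2 + 1) π.l := by
          have g1 : π'.seg (i2 + 1) π.l = π.seg (i2 + 1) (π.l - 1) + {π.p π.l} :=
            GenPerm.seg_insert_pred (u := t + 1) (by omega) (by omega) (by omega)
              (fun i hi1 hi2 => hid i (by omega) (by omega) (Or.inl (by omega))) hz
              (fun i hi1 hi2 => hshift i hi1 hi2)
          have g2 : π.seg (i2 + 1) π.l = π.seg (i2 + 1) (π.l - 1) + {π.p π.l} := by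
            have g3 := π.seg_split (a := i2 + 1) (b := π.l) (π.l - 1) (by omega) (by omega)
            rw [show π.l - 1 + 1 = π.l by omega] at g3
            rw [g3, GenPerm.seg_single]
          rw [g1, ← g2]
        have q3 : π'.seg (π.l + 1) i3 = π.seg (π.l + 1) i3 := hT4 _ _ (by omega) (by omega)
        have q4 : π'.seg (i4 + 1) π.size = π.seg (i4 + 1) π.size := hT4 _ _ (by omega) (by omega)
        rw [q1] at E1 HP
        rw [q2] at E2 HP
        rw [q3] at E3 HP
        rw [q4] at E4 HP
        exact h ⟨As, Bs, Cs, Ds, i1, i2, i3, i4, dAB, dAC, dAD, dBC, dBD, dCD, hne,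
          h12, h2l, hl3, h34, h4s, E1, E2, E3, E4, HP⟩
      · -- t < i2
        by_cases hi4 : i4 < π.size
        · have wmem : π.p π.size ∈ Ds ∨ π.p π.size ∈ Cs := by
            have := GenPerm.mem_corner E4 (q := π.size) (by omega) le_rfl
            rwa [pws] at this
          rcases wmem with hD | hC
          · obtain ⟨q, hq1, hq2, hq3⟩ := GenPerm.exists_pos_corner E2 (Or.inl hD)
            exact GenPerm.three_pos_contra (π := π') (by omega) (by omega) (by omega)
              (by omega) (by omega) (by omega) (by omega) (by omega) (by omega)
              hq3 pwt pws
          · obtain ⟨q, hq1, hq2, hq3⟩ := GenPerm.exists_pos_corner E3 (Or.inr hC)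
            exact GenPerm.three_pos_contra (π := π') (by omega) (by omega) (by omega)
              (by omega) (by omega) (by omega) (by omega) (by omega) (by omega)
              hq3 pwt pws
        · -- i4 = π.size : pattern P5
          have h4z : π'.seg (i4 + 1) π.size = 0 := GenPerm.seg_eq_zero (by omega)
          have hP5 : π'.seg 1 i1 ≠ 0 ∧ π'.seg (i2 + 1) π.l = 0 ∧
              π'.seg (π.l + 1) i3 ≠ 0 := by
            rcases HP with ⟨a, b, c, d⟩ | ⟨a, b, c, d⟩ | ⟨a, b, c, d⟩ | ⟨a, b, c, d⟩ | ⟨a, b, c, d⟩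
            · exact absurd h4z d
            · exact absurd h4z d
            · exact absurd h4z d
            · exact absurd h4z d
            · exact ⟨a, b, c⟩
          have hBD := GenPerm.setsum_eq_zero (E2.symm.trans hP5.2.1)
          have hDC := GenPerm.setsum_eq_zero (E4.symm.trans h4z)
          have hAne : As ≠ ∅ := fun hA => hne ⟨hA, hBD.2, hDC.2, hBD.1⟩
          by_cases hct1 : i1 ≤ t
          · have e1 : π.seg 1 i1 = As.val := by
              rw [← hT1 1 i1 le_rfl hct1, E1, hBD.2]; simp
            have e3 : π.seg (π.l + 1) i3 = As.val := by
              rw [← hT4 (π.l + 1) i3 (by omega) (by omega), E3, hDC.2]; simp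
            exact h (GenPerm.reducible_mk5 π As i1 i3 hAne (by omega) hl3 (by omega) e1 e3)
          · -- t < i1
            have wmem : π.p π.size ∈ As ∨ π.p π.size ∈ Bs := by
              have := GenPerm.mem_corner E1 (q := t) (by omega) (by omega)
              rwa [pwt] at this
            have hwA : π.p π.size ∈ As := by
              rcases wmem with hA | hB
              · exact hA
              · rw [hBD.2] at hB; exact absurd hB (Finset.notMem_empty _)
            obtain ⟨q, hq1, hq2, hq3⟩ := GenPerm.exists_pos_corner E3 (Or.inl hwA)
            by_cases hqs : q = π.size
            · -- i3 = π.size : bottom-line convention contradiction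
              have pcb1 : π'.p cb1 = π.p cb1 := hid cb1 (by omega) hcb12 (Or.inr hcbl1)
              have pcb2 : π'.p cb2 = π.p cb1 := by
                rw [hid cb2 (by omega) hcb22 (Or.inr hcbl2)]
                exact hcbeq.symm
              have hcnt2 : 2 ≤ (π'.seg (π.l + 1) i3).count (π.p cb1) :=
                GenPerm.count_ge_two hcbne (by omega) (by omega) (by omega) (by omega)
                  pcb1 pcb2
              rw [E3] at hcnt2
              have := GenPerm.count_setsum_le_one dAC (π.p cb1)
              omega
            · exact GenPerm.three_pos_contra (π := π') (by omega) (by omega) (by omega)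
                (by omega) (by omega) (by omega) (by omega) (by omega) (by omega)
                hq3 pwt pws
    · -- R1, second case : t = σ(2d) > l, type (l-1, m+1)
      have htls : t < π.size := by omega
      have hsz' : π'.size = π.size := by unfold GenPerm.size; rw [hl', hm']; omega
      rw [hl'] at h2l hl3 E2 E3 HP
      rw [hsz'] at h4s E4 HP
      rw [show π.l - 1 + 1 = π.l by omega] at E3 HP
      have pwt : π'.p t = π.p π.size := by
        rw [hid t (by omega) (by omega) (Or.inr (by omega))]
        exact htweq.symm
      have pws : π'.p π.size = π.p π.size := hid π.size (by omega) le_rfl (Or.inr (by omega))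
      have E1π : π.seg 1 i1 = As.val + Bs.val := by
        rw [← E1]
        exact (GenPerm.seg_eqOn (fun i hi1 hi2 => hid i hi1 (by omega) (Or.inl (by omega)))).symm
      have E2π : π.seg (i2 + 1) (π.l - 1) = Ds.val + Bs.val := by
        rw [← E2]
        exact (GenPerm.seg_eqOn (fun i hi1 hi2 => hid i (by omega) (by omega)
          (Or.inl (by omega)))).symm
      have e2full : π.seg (i2 + 1) π.l = Ds.val + Bs.val + {π.p π.l} := by
        have g3 := π.seg_split (a := i2 + 1) (b := π.l) (π.l - 1) (by omega) (by omega)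
        rw [show π.l - 1 + 1 = π.l by omega] at g3
        rw [g3, GenPerm.seg_single, E2π]
      by_cases hA : t - 1 ≤ i3
      · -- z falls in the bottom-left corner
        have e3π : π.seg (π.l + 1) i3 + {π.p π.l} = As.val + Cs.val := by
          rw [← E3]
          exact (GenPerm.seg_insert_succ (u := t - 1) (by omega) (by omega) hA
            (fun i hi1 hi2 => hshift i hi1 hi2) hz
            (fun i hi1 hi2 => hid i (by omega) (by omega) (Or.inr (by omega)))).symm
        have zmem : π.p π.l ∈ As ∨ π.p π.l ∈ Cs := by
          refine GenPerm.mem_setsum.1 ?_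
          rw [← e3π]
          exact Multiset.mem_add.2 (Or.inr (Multiset.mem_singleton_self _))
        have e4π : π.seg (i4 + 1) π.size = Ds.val + Cs.val := by
          rw [← E4]
          exact (GenPerm.seg_eqOn (fun i hi1 hi2 => hid i (by omega) (by omega)
            (Or.inr (by omega)))).symm
        rcases zmem with hzA | hzC
        · -- z ∈ As
          have hzB : π.p π.l ∉ Bs := Finset.disjoint_left.1 dAB hzA
          by_cases h4z : π'.seg (i4 + 1) π.size = 0
          · -- P5 special case
            have hP5 : π'.seg 1 i1 ≠ 0 ∧ π'.seg (i2 + 1) (π.l - 1) = 0 ∧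
                π'.seg π.l i3 ≠ 0 := by
              rcases HP with ⟨a, b, c, d⟩ | ⟨a, b, c, d⟩ | ⟨a, b, c, d⟩ | ⟨a, b, c, d⟩ | ⟨a, b, c, d⟩
              · exact absurd h4z d
              · exact absurd h4z d
              · exact absurd h4z d
              · exact absurd h4z d
              · exact ⟨a, b, c⟩
            have hBD := GenPerm.setsum_eq_zero (E2.symm.trans hP5.2.1)
            have hDC := GenPerm.setsum_eq_zero (E4.symm.trans h4z)
            have hi2e : i2 = π.l - 1 := by
              have := GenPerm.seg_eq_zero_iff.1 hP5.2.1; omega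
            by_cases htc : t ≤ i3
            · -- contradiction
              have wmem : π.p π.size ∈ As ∨ π.p π.size ∈ Cs := by
                have := GenPerm.mem_corner E3 (q := t) (by omega) htc
                rwa [pwt] at this
              have hwA : π.p π.size ∈ As := by
                rcases wmem with hA' | hC'
                · exact hA'
                · rw [hDC.2] at hC'; exact absurd hC' (Finset.notMem_empty _)
              obtain ⟨q, hq1, hq2, hq3⟩ := GenPerm.exists_pos_corner E1 (Or.inl hwA)
              exact GenPerm.three_pos_contra (π := π') (by omega) (by omega) (by omega)
                (by omega) (by omega) (by omega) (by omega) (by omega) (by omega)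
                hq3 pwt pws
            · -- i3 = t - 1 : special reducibility decomposition for π
              have hwA : π.p π.size ∉ As := by
                intro hw
                obtain ⟨q, hq1, hq2, hq3⟩ := GenPerm.exists_pos_corner E1 (Or.inl hw)
                exact GenPerm.three_pos_contra (π := π') (by omega) (by omega) (by omega)
                  (by omega) (by omega) (by omega) (by omega) (by omega) (by omega)
                  hq3 pwt pws
              have hwz : π.p π.l ≠ π.p π.size := by
                intro he
                refine GenPerm.three_pos_contra (π := π') (q := t - 1) (r := t)
                  (s := π.size) (x := π.p π.size) (by omega) (by omega) (by omega)
                  (by omega) (by omega) (by omega) (by omega) (by omega) (by omega)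
                  ?_ pwt pws
                rw [hz]
                exact he
              have g1 : π.seg (π.l + 1) i3 = (As.erase (π.p π.l)).val := by
                rw [hDC.2] at e3π
                have := GenPerm.cancel_z hzA e3π
                simpa using this
              have f1 : π.seg 1 i1 = (As.erase (π.p π.l)).val +
                  ({π.p π.l} : Finset A).val := by
                rw [E1π, hBD.2]
                simp only [Finset.empty_val, Multiset.empty_eq_zero, add_zero,
                  Finset.singleton_val]
                exact (GenPerm.val_cons_erase hzA).symm
              have f2 : π.seg (π.l - 1 + 1) π.l = (∅ : Finset A).val +
                  ({π.p π.l} : Finset A).val := by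
                rw [show π.l - 1 + 1 = π.l by omega, GenPerm.seg_single]; simp
              have f3 : π.seg (π.l + 1) t = (As.erase (π.p π.l)).val +
                  ({π.p π.size} : Finset A).val := by
                have g2 : π.seg (π.l + 1) t = π.seg (π.l + 1) (t - 1) + {π.p t} := by
                  have g3 := π.seg_split (a := π.l + 1) (b := t) (t - 1) (by omega) (by omega)
                  rw [show t - 1 + 1 = t by omega] at g3
                  rw [g3, GenPerm.seg_single]
                rw [g2, show t - 1 = i3 by omega, g1, ← htweq]
                simp
              have f4 : π.seg (π.size - 1 + 1) π.size = (∅ : Finset A).val +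
                  ({π.p π.size} : Finset A).val := by
                rw [show π.size - 1 + 1 = π.size by omega, GenPerm.seg_single]; simp
              refine h (GenPerm.reducible_mk π (As.erase (π.p π.l)) {π.p π.l}
                {π.p π.size} ∅ i1 (π.l - 1) t (π.size - 1) ?_ ?_ ?_ ?_ ?_ ?_
                (by simp) (by omega) (by omega) (by omega) (by omega) (by omega)
                f1 f2 f3 f4 (by rw [f2]; simp) (by rw [f4]; simp))
              · exact Finset.disjoint_singleton_right.2 (Finset.notMem_erase _ _)
              · exact Finset.disjoint_singleton_right.2
                  (fun hw => hwA (Finset.mem_of_mem_erase hw))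
              · exact Finset.disjoint_empty_right _
              · exact Finset.disjoint_singleton_right.2
                  (by simp only [Finset.mem_singleton]; exact fun he => hwz he.symm)
              · exact Finset.disjoint_empty_right _
              · exact Finset.disjoint_empty_right _
          · -- main decomposition, z ∈ As
            have f1 : π.seg 1 i1 = (As.erase (π.p π.l)).val +
                (insert (π.p π.l) Bs).val := by
              rw [E1π, ← GenPerm.sum_insert_erase hzA hzB]
            have f2 : π.seg (i2 + 1) π.l = Ds.val + (insert (π.p π.l) Bs).val := by
              rw [e2full, GenPerm.val_insert hzB, add_assoc]
            have f3 : π.seg (π.l + 1) i3 = (As.erase (π.p π.l)).val + Cs.val :=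
              GenPerm.cancel_z hzA e3π
            refine h (GenPerm.reducible_mk π (As.erase (π.p π.l)) (insert (π.p π.l) Bs)
              Cs Ds i1 i2 i3 i4 ?_ ?_ ?_ ?_ ?_ ?_ ?_ h12 (by omega) (by omega) h34 h4s
              f1 f2 f3 e4π ?_ ?_)
            · exact Finset.disjoint_insert_right.2 ⟨Finset.notMem_erase _ _,
                Finset.disjoint_of_subset_left (Finset.erase_subset _ _) dAB⟩
            · exact Finset.disjoint_of_subset_left (Finset.erase_subset _ _) dAC
            · exact Finset.disjoint_of_subset_left (Finset.erase_subset _ _) dAD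
            · exact (Finset.disjoint_insert_left.2
                ⟨Finset.disjoint_left.1 dAC hzA, dBC⟩)
            · exact (Finset.disjoint_insert_left.2
                ⟨Finset.disjoint_left.1 dAD hzA, dBD⟩)
            · exact dCD
            · simp [Finset.insert_ne_empty]
            · rw [f2]; exact GenPerm.setsum_ne_zero_right _ (Finset.insert_ne_empty _ _)
            · rw [e4π]; intro hcon; exact h4z (E4.trans hcon)
        · -- z ∈ Cs
          have hzD : π.p π.l ∉ Ds := Finset.disjoint_left.1 dCD hzC
          have f2 : π.seg (i2 + 1) π.l = (insert (π.p π.l) Ds).val + Bs.val := by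
            rw [e2full, GenPerm.val_insert hzD]
            abel
          have f3 : π.seg (π.l + 1) i3 = As.val + (Cs.erase (π.p π.l)).val :=
            GenPerm.cancel_z' hzC e3π
          have f4 : π.seg (i4 + 1) π.size = (insert (π.p π.l) Ds).val +
              (Cs.erase (π.p π.l)).val := by
            rw [e4π, GenPerm.val_insert hzD, ← GenPerm.val_cons_erase hzC]
            abel
          refine h (GenPerm.reducible_mk π As Bs (Cs.erase (π.p π.l))
            (insert (π.p π.l) Ds) i1 i2 i3 i4 ?_ ?_ ?_ ?_ ?_ ?_ ?_ h12 (by omega)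
            (by omega) h34 h4s E1π f2 f3 f4 ?_ ?_)
          · exact dAB
          · exact Finset.disjoint_of_subset_right (Finset.erase_subset _ _) dAC
          · exact Finset.disjoint_insert_right.2
              ⟨fun hA' => Finset.disjoint_left.1 dAC hA' hzC, dAD⟩
          · exact Finset.disjoint_of_subset_right (Finset.erase_subset _ _) dBC
          · exact Finset.disjoint_insert_right.2
              ⟨fun hB' => Finset.disjoint_left.1 dBC hB' hzC, dBD⟩
          · exact Finset.disjoint_insert_right.2 ⟨Finset.notMem_erase _ _,
              Finset.disjoint_of_subset_left (Finset.erase_subset _ _) dCD⟩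
          · simp [Finset.insert_ne_empty]
          · rw [f2]; exact GenPerm.setsum_ne_zero_left _ (Finset.insert_ne_empty _ _)
          · rw [f4]; exact GenPerm.setsum_ne_zero_left _ (Finset.insert_ne_empty _ _)
      · -- i3 < t - 1
        have e3π : π.seg (π.l + 1) (i3 + 1) = As.val + Cs.val := by
          rw [← E3]
          exact (GenPerm.seg_shift_succ (fun i hi1 hi2 => hshift i hi1 (by omega))).symm
        by_cases htb : t ≤ i4
        · have e4π : π.seg (i4 + 1) π.size = Ds.val + Cs.val := by
            rw [← E4]
            exact (GenPerm.seg_eqOn (fun i hi1 hi2 => hid i (by omega) (by omega)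
              (Or.inr (by omega)))).symm
          by_cases hi4 : i4 < π.size
          · have wmem : π.p π.size ∈ Ds ∨ π.p π.size ∈ Cs := by
              have := GenPerm.mem_corner E4 (q := π.size) (by omega) le_rfl
              rwa [pws] at this
            rcases wmem with hD | hC
            · obtain ⟨q, hq1, hq2, hq3⟩ := GenPerm.exists_pos_corner E2 (Or.inl hD)
              exact GenPerm.three_pos_contra (π := π') (by omega) (by omega) (by omega)
                (by omega) (by omega) (by omega) (by omega) (by omega) (by omega)
                hq3 pwt pws
            · obtain ⟨q, hq1, hq2, hq3⟩ := GenPerm.exists_pos_corner E3 (Or.inr hC)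
              exact GenPerm.three_pos_contra (π := π') (by omega) (by omega) (by omega)
                (by omega) (by omega) (by omega) (by omega) (by omega) (by omega)
                hq3 pwt pws
          · -- i4 = π.size : pattern P5
            have h4z : π'.seg (i4 + 1) π.size = 0 := GenPerm.seg_eq_zero (by omega)
            have hP5 : π'.seg 1 i1 ≠ 0 ∧ π'.seg (i2 + 1) (π.l - 1) = 0 ∧
                π'.seg π.l i3 ≠ 0 := by
              rcases HP with ⟨a, b, c, d⟩ | ⟨a, b, c, d⟩ | ⟨a, b, c, d⟩ | ⟨a, b, c, d⟩ | ⟨a, b, c, d⟩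
              · exact absurd h4z d
              · exact absurd h4z d
              · exact absurd h4z d
              · exact absurd h4z d
              · exact ⟨a, b, c⟩
            have hBD := GenPerm.setsum_eq_zero (E2.symm.trans hP5.2.1)
            have hDC := GenPerm.setsum_eq_zero (E4.symm.trans h4z)
            have hAne : As ≠ ∅ := fun hA' => hne ⟨hA', hBD.2, hDC.2, hBD.1⟩
            have e1 : π.seg 1 i1 = As.val := by rw [E1π, hBD.2]; simp
            have e3 : π.seg (π.l + 1) (i3 + 1) = As.val := by rw [e3π, hDC.2]; simp
            exact h (GenPerm.reducible_mk5 π As i1 (i3 + 1) hAne (by omega) (by omega)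
              (by omega) e1 e3)
        · -- i4 < t : two occurrences of w in the bottom-right corner
          exact GenPerm.corner_two_contra E4 dCD.symm (show t ≠ π.size by omega)
            (by omega) (by omega) (by omega) le_rfl pwt pws
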